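/- For w_t = t^γ with γ ≤ -1 and any integer r > 0, (-log Δ)^r w_t^# = O(t^{-1}(log t)^{r-1}) if γ < -1, and O(t^{-1}(log t)^r) if γ = -1, as t → ∞. -/

import Mathlib

/-- Coefficients of `-log(1-s) = Σ_{j≥1} s^j/j`. -/
noncomputable def harmCoef : ℕ → ℝ
  | 0 => 0
  | j + 1 => 1 / ((j : ℝ) + 1)

/-- Coefficient of `s^j` in `(-log(1-s))^r`, defined by `r`-fold convolution. -/
noncomputable def logCoef : ℕ → ℕ → ℝ
  | 0, 0 => 1
  | 0, _ + 1 => 0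
  | r + 1, j => ∑ k ∈ Finset.range (j + 1), harmCoef k * logCoef r (j - k)

section Aux
open Real Finset Filter

lemma harmCoef_nonneg (k : ℕ) : 0 ≤ harmCoef k := by
  cases k with
  | zero => simp [harmCoef]
  | succ j => simp only [harmCoef]; positivity

lemma harmCoef_eq (k : ℕ) (hk : 1 ≤ k) : harmCoef k = 1 / (k : ℝ) := by
  obtain ⟨j, rfl⟩ := Nat.exists_eq_add_of_le hk
  simp [harmCoef, add_comm]

lemma logCoef_nonneg (r j : ℕ) : 0 ≤ logCoef r j := by
  induction r generalizing j with
  | zero => cases j <;> simp [logCoef]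
  | succ r ih =>
    simp only [logCoef]
    exact Finset.sum_nonneg fun k _ => mul_nonneg (harmCoef_nonneg k) (ih _)

lemma logCoef_zero (r : ℕ) (hr : 0 < r) : logCoef r 0 = 0 := by
  obtain ⟨r, rfl⟩ := Nat.exists_eq_add_of_lt hr
  simp [logCoef, harmCoef]

lemma logCoef_one (j : ℕ) (hj : 1 ≤ j) : logCoef 1 j = 1 / (j : ℝ) := by
  simp only [logCoef]
  rw [Finset.sum_eq_single j]
  · rw [harmCoef_eq j hj]; simp [logCoef]
  · intro k hk hkj
    have hk' : k < j := lt_of_le_of_ne (Nat.lt_succ_iff.mp (Finset.mem_range.mp hk)) hkj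
    have : j - k ≠ 0 := Nat.sub_ne_zero_of_lt hk'
    obtain ⟨m, hm⟩ := Nat.exists_eq_succ_of_ne_zero this
    rw [hm]; simp [logCoef]
  · intro h; exact absurd (Finset.self_mem_range_succ j) h

lemma harm_sum_le (n : ℕ) : ∑ k ∈ range n, (1 : ℝ) / (k + 1) ≤ Real.log n + 1 := by
  induction n with
  | zero => simp
  | succ n ih =>
    rw [Finset.sum_range_succ]
    rcases Nat.eq_zero_or_pos n with rfl | hn
    · simp
    · have h1 : (1 : ℝ) / (n + 1) ≤ Real.log (n + 1) - Real.log n := by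
        have hn' : (0:ℝ) < n := by exact_mod_cast hn
        have := Real.log_le_sub_one_of_pos (show (0:ℝ) < (n : ℝ)/(n+1) by positivity)
        rw [Real.log_div (by positivity) (by positivity)] at this
        have : Real.log n - Real.log (n+1) ≤ (n:ℝ)/(n+1) - 1 := this
        have heq : (n:ℝ)/(n+1) - 1 = -(1/(n+1)) := by field_simp; ring
        linarith [this, heq ▸ this]
      push_cast
      linarith

/-- reflection: sum of f((t:ℝ)-k) over k ∈ Ico 1 t equals sum of f k -/

lemma sum_reflect (t : ℕ) (f : ℝ → ℝ) :
    ∑ k ∈ Finset.Ico 1 t, f ((t : ℝ) - k) = ∑ k ∈ Finset.Ico 1 t, f k := by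
  apply Finset.sum_nbij' (fun k => t - k) (fun k => t - k)
  · intro a ha
    rw [Finset.mem_Ico] at ha ⊢
    omega
  · intro a ha
    rw [Finset.mem_Ico] at ha ⊢
    omega
  · intro a ha; rw [Finset.mem_Ico] at ha; omega
  · intro a ha; rw [Finset.mem_Ico] at ha; omega
  · intro a ha
    rw [Finset.mem_Ico] at ha
    congr 1
    have : (↑(t - a) : ℝ) = (t : ℝ) - a := by
      push_cast [Nat.cast_sub (le_of_lt ha.2)]; ring
    rw [this]

lemma harm_Ico_le (n : ℕ) : ∑ k ∈ Finset.Ico 1 n, (1 : ℝ) / k ≤ Real.log n + 1 := by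
  have hsub : Finset.range (n - 1) ⊆ Finset.range n := by
    intro x hx; rw [Finset.mem_range] at hx ⊢; omega
  have h1 : ∑ k ∈ Finset.Ico 1 n, (1 : ℝ) / k = ∑ k ∈ range (n-1), (1:ℝ)/(k+1) := by
    rw [Finset.sum_Ico_eq_sum_range]
    apply Finset.sum_congr rfl
    intro x _; push_cast; ring_nf
  rw [h1]
  refine le_trans (Finset.sum_le_sum_of_subset_of_nonneg hsub ?_) (harm_sum_le n)
  intro i _ _; positivity

lemma partial_frac_sum (j : ℕ) (hj : 1 ≤ j) :
    ∑ k ∈ Finset.Ico 1 j, 1 / ((k : ℝ) * ((j : ℝ) - k)) ≤ 2 * (Real.log j + 1) / j := by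
  have hj' : (0:ℝ) < j := by exact_mod_cast hj
  have h1 : ∀ k ∈ Finset.Ico 1 j, 1 / ((k : ℝ) * ((j : ℝ) - k))
      = (1/(j:ℝ)) * (1/(k:ℝ) + 1/((j:ℝ) - k)) := by
    intro k hk
    rw [Finset.mem_Ico] at hk
    have hk1 : (1:ℝ) ≤ k := by exact_mod_cast hk.1
    have hk2 : (k:ℝ) + 1 ≤ j := by exact_mod_cast hk.2
    have h0 : (0:ℝ) < k := by linarith
    have h0' : (0:ℝ) < (j:ℝ) - k := by linarith
    field_simp; ring
  rw [Finset.sum_congr rfl h1, ← Finset.mul_sum, Finset.sum_add_distrib]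
  rw [sum_reflect j (fun x => 1/x)]
  have h2 : ∑ k ∈ Finset.Ico 1 j, 1/(k:ℝ) ≤ Real.log j + 1 := harm_Ico_le j
  have hlog : (0:ℝ) ≤ Real.log j + 1 := by
    have : (0:ℝ) ≤ Real.log j := Real.log_nonneg (by exact_mod_cast hj)
    linarith
  calc (1/(j:ℝ)) * (∑ k ∈ Finset.Ico 1 j, 1/(k:ℝ) + ∑ k ∈ Finset.Ico 1 j, 1/(k:ℝ))
      ≤ (1/(j:ℝ)) * ((Real.log j + 1) + (Real.log j + 1)) := by
        apply mul_le_mul_of_nonneg_left (by linarith) (by positivity)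
    _ = 2 * (Real.log j + 1) / j := by ring

lemma logCoef_le : ∀ r, 1 ≤ r → ∀ j, 1 ≤ j →
    logCoef r j ≤ 2 ^ r * (Real.log j + 1) ^ (r - 1) / j := by
  intro r
  induction r with
  | zero => omega
  | succ r ih =>
    intro _ j hj
    rcases Nat.eq_zero_or_pos r with rfl | hr
    · -- base case r = 1
      rw [logCoef_one j hj]
      have hj' : (0:ℝ) < j := by exact_mod_cast hj
      have h0 : (0+1-1:ℕ) = 0 := rfl
      rw [h0, pow_zero]
      rw [div_le_div_iff₀ hj' hj']
      norm_num
      nlinarith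
    · -- inductive step
      have hj' : (0:ℝ) < j := by exact_mod_cast hj
      have hlog : (0:ℝ) ≤ Real.log j + 1 := by
        have : (0:ℝ) ≤ Real.log j := Real.log_nonneg (by exact_mod_cast hj)
        linarith
      have hterm : ∀ k ∈ Finset.range (j+1), harmCoef k * logCoef r (j-k) ≤
          2 ^ r * (Real.log j + 1) ^ (r-1) *
            (if k ∈ Finset.Ico 1 j then 1 / ((k:ℝ) * ((j:ℝ) - k)) else 0) := by
        intro k hk
        rw [Finset.mem_range] at hk
        by_cases hmem : k ∈ Finset.Ico 1 j
        · rw [if_pos hmem]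
          rw [Finset.mem_Ico] at hmem
          obtain ⟨hk1, hk2⟩ := hmem
          have hjk1 : 1 ≤ j - k := by omega
          have hcast : ((j - k : ℕ) : ℝ) = (j:ℝ) - k := by
            push_cast [Nat.cast_sub (le_of_lt hk2)]; ring
          have hjk' : (0:ℝ) < (j:ℝ) - k := by
            rw [← hcast]; exact_mod_cast hjk1
          have hk' : (0:ℝ) < k := by exact_mod_cast hk1
          rw [harmCoef_eq k hk1]
          have h1 := ih hr (j - k) hjk1
          have h1k : (1:ℝ) ≤ (j:ℝ) - k := by rw [← hcast]; exact_mod_cast hjk1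
          have h3 : logCoef r (j-k) ≤ 2 ^ r * (Real.log j + 1) ^ (r-1) / ((j:ℝ) - k) := by
            refine h1.trans ?_
            rw [hcast]
            gcongr
            · have := Real.log_nonneg h1k; linarith
            · have : Real.log ((j:ℝ) - k) ≤ Real.log j := by
                apply Real.log_le_log (by linarith)
                have : (0:ℝ) ≤ k := by positivity
                linarith
              linarith
          calc 1/(k:ℝ) * logCoef r (j-k) ≤ 1/(k:ℝ) * (2 ^ r * (Real.log j + 1) ^ (r-1) / ((j:ℝ) - k)) := by
                apply mul_le_mul_of_nonneg_left h3 (by positivity)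
            _ = 2 ^ r * (Real.log j + 1) ^ (r-1) * (1/((k:ℝ) * ((j:ℝ) - k))) := by
                field_simp
        · rw [if_neg hmem, mul_zero]
          rw [Finset.mem_Ico] at hmem
          push_neg at hmem
          rcases Nat.eq_zero_or_pos k with rfl | hk1
          · simp [harmCoef]
          · have : k = j := by omega
            subst this
            simp [logCoef_zero r hr]
      have hsum : logCoef (r+1) j ≤ 2 ^ r * (Real.log j + 1) ^ (r-1) *
          ∑ k ∈ Finset.Ico 1 j, 1 / ((k:ℝ) * ((j:ℝ) - k)) := by
        show (∑ k ∈ Finset.range (j + 1), harmCoef k * logCoef r (j - k)) ≤ _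
        calc ∑ k ∈ Finset.range (j + 1), harmCoef k * logCoef r (j - k)
            ≤ ∑ k ∈ Finset.range (j+1), 2 ^ r * (Real.log j + 1) ^ (r-1) *
              (if k ∈ Finset.Ico 1 j then 1 / ((k:ℝ) * ((j:ℝ) - k)) else 0) :=
              Finset.sum_le_sum hterm
          _ = 2 ^ r * (Real.log j + 1) ^ (r-1) *
              ∑ k ∈ Finset.range (j+1), (if k ∈ Finset.Ico 1 j then 1 / ((k:ℝ) * ((j:ℝ) - k)) else 0) := by
              rw [Finset.mul_sum]
          _ = _ := by
              congr 1
              rw [Finset.sum_ite_mem]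
              congr 1
              rw [Finset.inter_eq_right]
              intro x hx; rw [Finset.mem_Ico] at hx; rw [Finset.mem_range]; omega
      refine hsum.trans ?_
      calc 2 ^ r * (Real.log j + 1) ^ (r-1) * ∑ k ∈ Finset.Ico 1 j, 1 / ((k:ℝ) * ((j:ℝ) - k))
          ≤ 2 ^ r * (Real.log j + 1) ^ (r-1) * (2 * (Real.log j + 1) / j) := by
            apply mul_le_mul_of_nonneg_left (partial_frac_sum j hj) (by positivity)
        _ = 2 ^ (r+1) * ((Real.log j + 1) ^ (r-1) * (Real.log j + 1)) / j := by ring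
        _ = 2 ^ (r+1) * (Real.log j + 1) ^ (r+1-1) / j := by
            have he : r + 1 - 1 = (r - 1) + 1 := by omega
            rw [he]
            ring

lemma case_eq (t : ℕ) (ht : 1 ≤ t) :
    ∑ j ∈ Finset.Ico 1 t, 1/(j:ℝ) * ((t:ℝ)-j) ^ (-1:ℝ) ≤ 2 * (Real.log t + 1) / t := by
  have h : ∀ j ∈ Finset.Ico 1 t, 1/(j:ℝ) * ((t:ℝ)-j) ^ (-1:ℝ) = 1 / ((j:ℝ) * ((t:ℝ) - j)) := by
    intro j hj
    rw [Finset.mem_Ico] at hj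
    have h1 : (0:ℝ) < (t:ℝ) - j := by
      have : (j:ℝ) + 1 ≤ t := by exact_mod_cast hj.2
      linarith
    rw [Real.rpow_neg_one]
    field_simp
  rw [Finset.sum_congr rfl h]
  exact partial_frac_sum t ht

lemma small_term (γ : ℝ) (hγ : γ < -1) :
    ∀ᶠ t : ℕ in atTop, ((t:ℝ)/2) ^ γ * (Real.log t + 1) ≤ (t:ℝ)⁻¹ := by
  set s : ℝ := -(1+γ) with hs_def
  have hs : 0 < s := by simp only [hs_def]; linarith
  have l1 : Tendsto (fun x:ℝ => Real.log x / x ^ s) atTop (nhds 0) :=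
    (isLittleO_log_rpow_atTop hs).tendsto_div_nhds_zero
  have l2 : Tendsto (fun x:ℝ => (x ^ s)⁻¹) atTop (nhds 0) :=
    (tendsto_rpow_atTop hs).inv_tendsto_atTop
  have l3 : Tendsto (fun x:ℝ => (2:ℝ)^(-γ) * (Real.log x / x ^ s + (x ^ s)⁻¹)) atTop (nhds 0) := by
    have := (l1.add l2).const_mul ((2:ℝ)^(-γ))
    simpa using this
  have key : ∀ x:ℝ, 0 < x →
      x * ((x/2)^γ * (Real.log x + 1)) = (2:ℝ)^(-γ) * (Real.log x / x^s + (x^s)⁻¹) := by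
    intro x hx
    have e1 : ((x/2):ℝ)^γ = x^γ / 2^γ := Real.div_rpow hx.le (by norm_num) γ
    have hinv : (x^s)⁻¹ = x^(1+γ) := by rw [hs_def, Real.rpow_neg hx.le, inv_inv]
    have e2 : x * x^γ = x^(1+γ) := by rw [Real.rpow_add hx, Real.rpow_one]
    have e4 : (2:ℝ)^(-γ) = ((2:ℝ)^γ)⁻¹ := Real.rpow_neg (by norm_num) γ
    calc x * ((x/2)^γ * (Real.log x + 1)) = (x * x^γ) * ((2:ℝ)^γ)⁻¹ * (Real.log x + 1) := by
          rw [e1]; ring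
      _ = x^(1+γ) * (2:ℝ)^(-γ) * (Real.log x + 1) := by rw [e2, e4]
      _ = (2:ℝ)^(-γ) * (Real.log x / x^s + (x^s)⁻¹) := by
          rw [div_eq_mul_inv, hinv]; ring
  have l4 : Tendsto (fun x:ℝ => x * ((x/2)^γ * (Real.log x + 1))) atTop (nhds 0) := by
    apply l3.congr'
    filter_upwards [eventually_gt_atTop (0:ℝ)] with x hx
    exact (key x hx).symm
  have l5 : ∀ᶠ x:ℝ in atTop, x * ((x/2)^γ * (Real.log x + 1)) < 1 :=
    l4.eventually_lt_const one_pos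
  have l6 : ∀ᶠ t:ℕ in atTop, (t:ℝ) * (((t:ℝ)/2)^γ * (Real.log t + 1)) < 1 :=
    (tendsto_natCast_atTop_atTop (R := ℝ)).eventually l5
  filter_upwards [l6, eventually_ge_atTop 1] with t h1 h2
  have ht0 : (0:ℝ) < t := by exact_mod_cast h2
  rw [show ((t:ℝ))⁻¹ = 1/(t:ℝ) by rw [one_div], le_div_iff₀ ht0]
  nlinarith

lemma case_lt (γ : ℝ) (hγ : γ < -1) :
    ∀ᶠ t : ℕ in atTop, ∑ j ∈ Finset.Ico 1 t, 1/(j:ℝ) * ((t:ℝ)-j) ^ γ ≤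
      (2 * (∑' m : ℕ, (m:ℝ) ^ γ) + 1) * (t:ℝ)⁻¹ := by
  set Z : ℝ := ∑' m : ℕ, (m:ℝ) ^ γ with hZ
  have hsum : Summable (fun m : ℕ => (m:ℝ) ^ γ) := Real.summable_nat_rpow.mpr hγ
  filter_upwards [small_term γ hγ, eventually_ge_atTop 1] with t hsm ht
  have ht0 : (0:ℝ) < t := by exact_mod_cast ht
  -- facts about j in range
  have hjfact : ∀ j ∈ Finset.Ico 1 t, (0:ℝ) < (j:ℝ) ∧ (0:ℝ) < (t:ℝ) - j := by
    intro j hj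
    rw [Finset.mem_Ico] at hj
    constructor
    · exact_mod_cast hj.1
    · have : (j:ℝ) + 1 ≤ t := by exact_mod_cast hj.2
      linarith
  -- split
  rw [← Finset.sum_filter_add_sum_filter_not (Finset.Ico 1 t) (fun j => 2*j < t)]
  have hA : ∑ j ∈ (Finset.Ico 1 t).filter (fun j => 2*j < t), 1/(j:ℝ) * ((t:ℝ)-j) ^ γ ≤
      ((t:ℝ)/2) ^ γ * (Real.log t + 1) := by
    have hterm : ∀ j ∈ (Finset.Ico 1 t).filter (fun j => 2*j < t),
        1/(j:ℝ) * ((t:ℝ)-j) ^ γ ≤ ((t:ℝ)/2) ^ γ * (1/(j:ℝ)) := by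
      intro j hj
      rw [Finset.mem_filter] at hj
      obtain ⟨hj1, hj2⟩ := hj
      obtain ⟨hjp, hjt⟩ := hjfact j hj1
      have h2j : (2:ℝ) * j < t := by exact_mod_cast hj2
      have hle : (t:ℝ)/2 ≤ (t:ℝ) - j := by linarith
      have := Real.rpow_le_rpow_of_nonpos (by positivity : (0:ℝ) < (t:ℝ)/2) hle (by linarith : γ ≤ 0)
      calc 1/(j:ℝ) * ((t:ℝ)-j) ^ γ ≤ 1/(j:ℝ) * ((t:ℝ)/2) ^ γ :=
            mul_le_mul_of_nonneg_left this (by positivity)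
        _ = ((t:ℝ)/2) ^ γ * (1/(j:ℝ)) := by ring
    calc ∑ j ∈ (Finset.Ico 1 t).filter (fun j => 2*j < t), 1/(j:ℝ) * ((t:ℝ)-j) ^ γ
        ≤ ∑ j ∈ (Finset.Ico 1 t).filter (fun j => 2*j < t), ((t:ℝ)/2) ^ γ * (1/(j:ℝ)) :=
          Finset.sum_le_sum hterm
      _ = ((t:ℝ)/2) ^ γ * ∑ j ∈ (Finset.Ico 1 t).filter (fun j => 2*j < t), (1:ℝ)/j := by
          rw [Finset.mul_sum]
      _ ≤ ((t:ℝ)/2) ^ γ * (Real.log t + 1) := by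
          apply mul_le_mul_of_nonneg_left _ (by positivity)
          refine le_trans (Finset.sum_le_sum_of_subset_of_nonneg (Finset.filter_subset _ _) ?_)
            (harm_Ico_le t)
          intro i _ _; positivity
  have hB : ∑ j ∈ (Finset.Ico 1 t).filter (fun j => ¬ 2*j < t), 1/(j:ℝ) * ((t:ℝ)-j) ^ γ ≤
      2 * Z * (t:ℝ)⁻¹ := by
    have hterm : ∀ j ∈ (Finset.Ico 1 t).filter (fun j => ¬ 2*j < t),
        1/(j:ℝ) * ((t:ℝ)-j) ^ γ ≤ 2 * (t:ℝ)⁻¹ * ((t:ℝ)-j) ^ γ := by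
      intro j hj
      rw [Finset.mem_filter] at hj
      obtain ⟨hj1, hj2⟩ := hj
      obtain ⟨hjp, hjt⟩ := hjfact j hj1
      push_neg at hj2
      have h2j : (t:ℝ) ≤ 2 * j := by exact_mod_cast hj2
      have : 1/(j:ℝ) ≤ 2 * (t:ℝ)⁻¹ := by
        rw [div_le_iff₀ hjp]
        rw [inv_eq_one_div]
        rw [mul_comm (2:ℝ), mul_assoc, div_mul_eq_mul_div, one_mul, le_div_iff₀ ht0]
        linarith
      exact mul_le_mul_of_nonneg_right this (Real.rpow_nonneg hjt.le γ)
    calc ∑ j ∈ (Finset.Ico 1 t).filter (fun j => ¬ 2*j < t), 1/(j:ℝ) * ((t:ℝ)-j) ^ γ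
        ≤ ∑ j ∈ (Finset.Ico 1 t).filter (fun j => ¬ 2*j < t), 2 * (t:ℝ)⁻¹ * ((t:ℝ)-j) ^ γ :=
          Finset.sum_le_sum hterm
      _ = 2 * (t:ℝ)⁻¹ * ∑ j ∈ (Finset.Ico 1 t).filter (fun j => ¬ 2*j < t), ((t:ℝ)-j) ^ γ := by
          rw [Finset.mul_sum]
      _ ≤ 2 * (t:ℝ)⁻¹ * ∑ j ∈ Finset.Ico 1 t, ((t:ℝ)-j) ^ γ := by
          apply mul_le_mul_of_nonneg_left _ (by positivity)
          apply Finset.sum_le_sum_of_subset_of_nonneg (Finset.filter_subset _ _)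
          intro i hi _
          exact Real.rpow_nonneg (hjfact i hi).2.le γ
      _ = 2 * (t:ℝ)⁻¹ * ∑ j ∈ Finset.Ico 1 t, (j:ℝ) ^ γ := by
          rw [sum_reflect t (fun x => x ^ γ)]
      _ ≤ 2 * (t:ℝ)⁻¹ * Z := by
          apply mul_le_mul_of_nonneg_left _ (by positivity)
          exact Summable.sum_le_tsum _ (fun i _ => Real.rpow_nonneg (Nat.cast_nonneg i) γ) hsum
      _ = 2 * Z * (t:ℝ)⁻¹ := by ring
  calc _ ≤ ((t:ℝ)/2) ^ γ * (Real.log t + 1) + 2 * Z * (t:ℝ)⁻¹ := add_le_add hA hB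
    _ ≤ (t:ℝ)⁻¹ + 2 * Z * (t:ℝ)⁻¹ := by linarith [hsm]
    _ = (2 * Z + 1) * (t:ℝ)⁻¹ := by ring

lemma sum_le_main (γ : ℝ) (r : ℕ) (hr : 1 ≤ r) (t : ℕ) (ht : 1 ≤ t) :
    ∑ j ∈ Finset.range t, logCoef r j * ((t : ℝ) - j) ^ γ ≤
      2 ^ r * (Real.log t + 1) ^ (r - 1) *
        ∑ j ∈ Finset.Ico 1 t, 1/(j:ℝ) * ((t:ℝ)-j) ^ γ := by
  have hsub : Finset.Ico 1 t ⊆ Finset.range t := by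
    intro x hx; rw [Finset.mem_Ico] at hx; rw [Finset.mem_range]; omega
  have hzero : ∀ x ∈ Finset.range t, x ∉ Finset.Ico 1 t →
      logCoef r x * ((t : ℝ) - x) ^ γ = 0 := by
    intro x hx hnx
    rw [Finset.mem_range] at hx
    rw [Finset.mem_Ico] at hnx
    have : x = 0 := by omega
    subst this
    rw [logCoef_zero r hr, zero_mul]
  rw [← Finset.sum_subset hsub hzero]
  rw [Finset.mul_sum]
  apply Finset.sum_le_sum
  intro j hj
  rw [Finset.mem_Ico] at hj
  have hj1 : (1:ℝ) ≤ j := by exact_mod_cast hj.1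
  have hjt : (j:ℝ) + 1 ≤ t := by exact_mod_cast hj.2
  have hX : (0:ℝ) ≤ ((t:ℝ) - j) ^ γ := Real.rpow_nonneg (by linarith) γ
  have h1 := logCoef_le r hr j hj.1
  have h2 : (Real.log j + 1) ^ (r-1) ≤ (Real.log t + 1) ^ (r-1) := by
    apply pow_le_pow_left₀
    · have := Real.log_nonneg hj1; linarith
    · have := Real.log_le_log (by linarith : (0:ℝ) < j) (by linarith : (j:ℝ) ≤ t)
      linarith
  calc logCoef r j * ((t : ℝ) - j) ^ γ
      ≤ (2 ^ r * (Real.log j + 1) ^ (r - 1) / j) * ((t : ℝ) - j) ^ γ :=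
        mul_le_mul_of_nonneg_right h1 hX
    _ ≤ (2 ^ r * (Real.log t + 1) ^ (r - 1) / j) * ((t : ℝ) - j) ^ γ := by
        apply mul_le_mul_of_nonneg_right _ hX
        gcongr
    _ = 2 ^ r * (Real.log t + 1) ^ (r - 1) * (1/(j:ℝ) * ((t:ℝ)-j) ^ γ) := by
        field_simp

end Aux

open Filter in
theorem stmt5 (γ : ℝ) (hγ : γ ≤ -1) (r : ℕ) (hr : 0 < r) :
    (fun t : ℕ => ∑ j ∈ Finset.range t, logCoef r j * ((t : ℝ) - j) ^ γ)
      =O[atTop]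
    (fun t : ℕ => (t : ℝ)⁻¹ * Real.log t ^ (if γ < -1 then r - 1 else r)) := by
  rw [Asymptotics.isBigO_iff]
  have hgen : ∀ t : ℕ, 3 ≤ t → 1 ≤ Real.log t ∧ (0:ℝ) < t ∧
      0 ≤ ∑ j ∈ Finset.range t, logCoef r j * ((t : ℝ) - j) ^ γ := by
    intro t ht3
    have ht0 : (0:ℝ) < t := by
      have : (3:ℝ) ≤ t := by exact_mod_cast ht3
      linarith
    refine ⟨?_, ht0, ?_⟩
    · rw [Real.le_log_iff_exp_le ht0]
      calc Real.exp 1 ≤ 2.7182818286 := Real.exp_one_lt_d9.le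
        _ ≤ (t:ℝ) := by
          have : (3:ℝ) ≤ t := by exact_mod_cast ht3
          linarith
    · apply Finset.sum_nonneg
      intro j hj
      rw [Finset.mem_range] at hj
      have : (j:ℝ) + 1 ≤ t := by exact_mod_cast hj
      exact mul_nonneg (logCoef_nonneg r j) (Real.rpow_nonneg (by linarith) γ)
  by_cases hcase : γ < -1
  · set Z : ℝ := ∑' m : ℕ, (m:ℝ) ^ γ with hZdef
    have hZ : 0 ≤ Z := tsum_nonneg (fun m => Real.rpow_nonneg (Nat.cast_nonneg m) γ)
    refine ⟨2^r * (2*Z+1) * 2^(r-1), ?_⟩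
    filter_upwards [case_lt γ hcase, eventually_ge_atTop 3] with t hlt ht3
    obtain ⟨hlog1, ht0, hf0⟩ := hgen t ht3
    have hlogpos : (0:ℝ) ≤ Real.log t + 1 := by linarith
    rw [if_pos hcase, Real.norm_of_nonneg hf0, Real.norm_of_nonneg (by positivity)]
    calc ∑ j ∈ Finset.range t, logCoef r j * ((t : ℝ) - j) ^ γ
        ≤ 2 ^ r * (Real.log t + 1) ^ (r - 1) *
            ∑ j ∈ Finset.Ico 1 t, 1/(j:ℝ) * ((t:ℝ)-j) ^ γ :=
          sum_le_main γ r hr t (by omega)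
      _ ≤ 2 ^ r * (Real.log t + 1) ^ (r - 1) * ((2*Z+1) * (t:ℝ)⁻¹) := by
          apply mul_le_mul_of_nonneg_left hlt
          exact mul_nonneg (by positivity) (pow_nonneg hlogpos _)
      _ ≤ 2 ^ r * (2 * Real.log t) ^ (r - 1) * ((2*Z+1) * (t:ℝ)⁻¹) := by
          apply mul_le_mul_of_nonneg_right _ (by positivity)
          apply mul_le_mul_of_nonneg_left _ (by positivity)
          exact pow_le_pow_left₀ hlogpos (by linarith) _
      _ = 2^r * (2*Z+1) * 2^(r-1) * ((t:ℝ)⁻¹ * Real.log t ^ (r-1)) := by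
          rw [mul_pow]; ring
  · have hγeq : γ = -1 := le_antisymm hγ (not_lt.mp hcase)
    subst hγeq
    refine ⟨2^(r+1) * 2^r, ?_⟩
    filter_upwards [eventually_ge_atTop 3] with t ht3
    obtain ⟨hlog1, ht0, hf0⟩ := hgen t ht3
    have hlogpos : (0:ℝ) ≤ Real.log t + 1 := by linarith
    rw [if_neg hcase, Real.norm_of_nonneg hf0, Real.norm_of_nonneg (by positivity)]
    have hrr : r - 1 + 1 = r := by omega
    calc ∑ j ∈ Finset.range t, logCoef r j * ((t : ℝ) - j) ^ (-1:ℝ)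
        ≤ 2 ^ r * (Real.log t + 1) ^ (r - 1) *
            ∑ j ∈ Finset.Ico 1 t, 1/(j:ℝ) * ((t:ℝ)-j) ^ (-1:ℝ) :=
          sum_le_main (-1) r hr t (by omega)
      _ ≤ 2 ^ r * (Real.log t + 1) ^ (r - 1) * (2 * (Real.log t + 1) / t) := by
          apply mul_le_mul_of_nonneg_left (case_eq t (by omega))
          exact mul_nonneg (by positivity) (pow_nonneg hlogpos _)
      _ = 2 ^ (r+1) * (Real.log t + 1) ^ ((r-1)+1) / t := by
          rw [pow_succ]; ring
      _ = 2 ^ (r+1) * (Real.log t + 1) ^ r / t := by rw [hrr]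
      _ ≤ 2 ^ (r+1) * (2 * Real.log t) ^ r / t := by
          gcongr
          linarith
      _ = 2^(r+1) * 2^r * ((t:ℝ)⁻¹ * Real.log t ^ r) := by
          rw [mul_pow]; field_simp
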